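/- If every directed cycle in the envy graph of an allocation A has weight at most 0, then setting p i equal to the maximum weight of a directed path starting at agent i in the envy graph (with paths of at most one vertex having weight 0) yields p i ≥ 0 for all i and the pair (A, p) is envy-free; in particular A is envy-freeable. -/

import Mathlib

/-- The weight of a directed path, given as a list of agents: the sum of the weights
of its consecutive arcs (a list with at most one vertex has weight 0). -/
def pathWeight {n : ℕ} (w : Fin n → Fin n → ℝ) (l : List (Fin n)) : ℝ :=
  ((l.zip l.tail).map fun q => w q.1 q.2).sum

variable {n : ℕ} (w : Fin n → Fin n → ℝ)

@[simp] lemma pathWeight_nil : pathWeight w [] = 0 := rfl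
@[simp] lemma pathWeight_singleton (a : Fin n) : pathWeight w [a] = 0 := rfl

lemma pathWeight_cons_cons (a b : Fin n) (l : List (Fin n)) :
    pathWeight w (a :: b :: l) = w a b + pathWeight w (b :: l) := by
  simp [pathWeight]

lemma pathWeight_cons (a b : Fin n) (l : List (Fin n)) (h : l.head? = some b) :
    pathWeight w (a :: l) = w a b + pathWeight w l := by
  cases l with
  | nil => simp at h
  | cons c t => simp only [List.head?_cons, Option.some.injEq] at h; subst h
                exact pathWeight_cons_cons w a c t

lemma pathWeight_split (x : Fin n) : ∀ (l₁ l₂ : List (Fin n)),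
    pathWeight w (l₁ ++ x :: l₂) = pathWeight w (l₁ ++ [x]) + pathWeight w (x :: l₂) := by
  intro l₁
  induction l₁ with
  | nil => simp
  | cons a t ih =>
      intro l₂
      cases t with
      | nil => simp [pathWeight_cons_cons]
      | cons b t' =>
          simp only [List.cons_append] at ih ⊢
          rw [pathWeight_cons_cons, pathWeight_cons_cons, ih]; ring

lemma pathWeight_ofFn : ∀ (k : ℕ) (c : Fin (k+1) → Fin n),
    pathWeight w (List.ofFn c) = ∑ j : Fin k, w (c j.castSucc) (c j.succ) := by
  intro k
  induction k with
  | zero => intro c; simp [List.ofFn_succ]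
  | succ k ih =>
      intro c
      rw [List.ofFn_succ, pathWeight_cons w (c 0) (c 1) _
        (by rw [List.ofFn_succ]; simp), ih fun i => c i.succ, Fin.sum_univ_succ]
      simp [-Fin.castSucc_succ, Fin.succ_castSucc]

lemma cycle_sum (r : ℕ) (c : Fin (r+2) → Fin n) :
    ∑ t : Fin (r+2), w (c t) (c (t+1)) =
      pathWeight w (List.ofFn c) + w (c (Fin.last (r+1))) (c 0) := by
  rw [Fin.sum_univ_castSucc, pathWeight_ofFn]
  congr 1
  · refine Finset.sum_congr rfl fun j _ => ?_
    rw [Fin.coeSucc_eq_succ]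
  · rw [Fin.last_add_one]

/-- If every directed cycle in the envy graph of an allocation A has
weight at most 0, then setting p i equal to the maximum weight of a directed path
starting at agent i yields p i ≥ 0 for all i and (A, p) envy-free; in particular
A is envy-freeable. -/
theorem heaviest_path_payments_envy_free
    (n m : ℕ) (hn : 1 ≤ n)
    (v : Fin n → Finset (Fin m) → ℝ)
    (A : Fin n → Finset (Fin m))
    (hdisj : ∀ i k, i ≠ k → Disjoint (A i) (A k))
    (hcover : Finset.univ.biUnion A = Finset.univ)
    (hcyc : ∀ (r : ℕ) (c : Fin (r + 2) → Fin n), Function.Injective c →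
      (∑ t : Fin (r + 2), (v (c t) (A (c (t + 1))) - v (c t) (A (c t)))) ≤ 0)
    (p : Fin n → ℝ)
    (hp : ∀ i : Fin n, IsGreatest
      {x : ℝ | ∃ l : List (Fin n), l.Nodup ∧ l.head? = some i ∧
        pathWeight (fun a b => v a (A b) - v a (A a)) l = x} (p i)) :
    (∀ i, 0 ≤ p i) ∧ (∀ i k : Fin n, v i (A i) + p i ≥ v i (A k) + p k) := by
  set w : Fin n → Fin n → ℝ := fun a b => v a (A b) - v a (A a) with hwdef
  have key : ∀ (r : ℕ) (l : List (Fin n)), l.Nodup → l.length = r + 2 →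
      ∀ (h1 : l ≠ []), pathWeight w l + w (l.getLast h1) (l.head h1) ≤ 0 := by
    intro r l hnd hlen h1
    set c : Fin (r+2) → Fin n := fun t => l.get (Fin.cast hlen.symm t) with hc
    have hinj : Function.Injective c := by
      intro a b hab
      have h2 := (List.nodup_iff_injective_get.mp hnd) hab
      have := congrArg Fin.val h2
      simp at this
      exact Fin.val_injective this
    have hofn : List.ofFn c = l := by
      apply List.ext_get (by simp [hlen])
      intro i hi1 hi2
      rw [List.get_ofFn]
      simp [hc]
    have hsum : ∑ t : Fin (r+2), w (c t) (c (t+1)) =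
        pathWeight w l + w (c (Fin.last (r+1))) (c 0) := by
      rw [cycle_sum, hofn]
    have h0 : pathWeight w l + w (c (Fin.last (r+1))) (c 0) ≤ 0 := by
      rw [← hsum]; exact hcyc r c hinj
    have hlast : c (Fin.last (r+1)) = l.getLast h1 := by
      rw [List.getLast_eq_getElem (l := l) h1]
      simp [hc, hlen]
    have hhead : c 0 = l.head h1 := by
      rw [List.head_eq_getElem_zero h1]
      simp [hc]
    rwa [hlast, hhead] at h0
  constructor
  · intro i
    exact (hp i).2 ⟨[i], by simp, by simp, by simp⟩
  · intro i k
    rcases eq_or_ne i k with rfl | hik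
    · exact le_refl _
    obtain ⟨l, hnd, hhd, hwl⟩ := (hp k).1
    cases l with
    | nil => simp at hhd
    | cons k' tl =>
      simp only [List.head?_cons, Option.some.injEq] at hhd
      subst hhd
      by_cases hmem : i ∈ tl
      · obtain ⟨t₁, t₂, rfl⟩ := List.append_of_mem hmem
        have hsplit := pathWeight_split w i (k' :: t₁) t₂
        have hnd1 : ((k' :: t₁) ++ [i]).Nodup := by
          exact hnd.sublist
            ((List.cons_sublist_cons.mpr (List.nil_sublist t₂)).append_left (k' :: t₁))
        have hnd2 : (i :: t₂).Nodup := hnd.sublist (by simp)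
        have hcycle := key t₁.length ((k' :: t₁) ++ [i]) hnd1 (by simp) (by simp)
        have hub : pathWeight w (i :: t₂) ≤ p i :=
          (hp i).2 ⟨i :: t₂, hnd2, by simp, rfl⟩
        have hlast : ((k' :: t₁) ++ [i]).getLast (by simp) = i := by
          simp [List.getLast_append]
        have hhead : ((k' :: t₁) ++ [i]).head (by simp) = k' := rfl
        rw [hlast, hhead] at hcycle
        have hpk : pathWeight w ((k' :: t₁) ++ [i]) + pathWeight w (i :: t₂) = p k' := by
          rw [← hsplit]; simpa using hwl
        have hwik : w i k' = v i (A k') - v i (A i) := rfl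
        linarith
      · have hndfull : (i :: k' :: tl).Nodup := by
          refine List.nodup_cons.mpr ⟨?_, hnd⟩
          simp [hik, hmem]
        have hub : pathWeight w (i :: k' :: tl) ≤ p i :=
          (hp i).2 ⟨i :: k' :: tl, hndfull, by simp, rfl⟩
        rw [pathWeight_cons_cons, hwl] at hub
        have hwik : w i k' = v i (A k') - v i (A i) := rfl
        linarith
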